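/- Let A > 0 and θ > 0 be reals, B a real, and k ≥ 1 an integer. With S_k(x) = ∑_{j=1}^{k} x^j and T_k(x) = ∑_{j=0}^{k} x^j, one has [B·(S_k(θ)/T_k(θ))·(T_k(A)/S_k(A))]/θ = (B/A)·(S_k(1/θ)/T_k(1/θ))·(T_k(1/A)/S_k(1/A)); i.e., the enhanced van Leer limiter φ_{A,B}(θ) = B·(S_k(θ)/T_k(θ))·(T_k(A)/S_k(A)) satisfies the symmetry-preserving condition φ_{A,B}(θ)/θ = φ_{1/A, B/A}(1/θ). -/
import Mathlib


/-- `S k x = x + x² + ⋯ + x^k`. -/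
noncomputable def vlS (k : ℕ) (x : ℝ) : ℝ := ∑ j ∈ Finset.Icc 1 k, x ^ j

/-- `T k x = 1 + x + ⋯ + x^k`. -/
noncomputable def vlT (k : ℕ) (x : ℝ) : ℝ := ∑ j ∈ Finset.range (k + 1), x ^ j

lemma vlS_pos {k : ℕ} (hk : 1 ≤ k) {x : ℝ} (hx : 0 < x) : 0 < vlS k x := by
  apply Finset.sum_pos (fun j _ => pow_pos hx j)
  exact ⟨1, Finset.mem_Icc.mpr ⟨le_refl 1, hk⟩⟩

lemma vlT_pos (k : ℕ) {x : ℝ} (hx : 0 < x) : 0 < vlT k x := by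
  apply Finset.sum_pos (fun j _ => pow_pos hx j)
  exact ⟨0, Finset.mem_range.mpr (Nat.succ_pos k)⟩

lemma vlS_inv (k : ℕ) {x : ℝ} (hx : x ≠ 0) :
    vlS k (1 / x) = vlS k x / x ^ (k + 1) := by
  unfold vlS
  rw [Finset.sum_div]
  refine Finset.sum_nbij' (fun j => k + 1 - j) (fun j => k + 1 - j) ?_ ?_ ?_ ?_ ?_
  · intro j hj; simp only [Finset.mem_Icc] at *; omega
  · intro j hj; simp only [Finset.mem_Icc] at *; omega
  · intro j hj; simp only [Finset.mem_Icc] at *; omega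
  · intro j hj; simp only [Finset.mem_Icc] at *; omega
  · intro j hj
    simp only [Finset.mem_Icc] at hj
    rw [div_pow, one_pow, div_eq_div_iff (pow_ne_zero _ hx) (pow_ne_zero _ hx),
      one_mul, ← pow_add]
    congr 1; beta_reduce; omega

lemma vlT_inv (k : ℕ) {x : ℝ} (hx : x ≠ 0) :
    vlT k (1 / x) = vlT k x / x ^ k := by
  unfold vlT
  rw [Finset.sum_div]
  refine Finset.sum_nbij' (fun j => k - j) (fun j => k - j) ?_ ?_ ?_ ?_ ?_
  · intro j hj; simp only [Finset.mem_range] at *; omega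
  · intro j hj; simp only [Finset.mem_range] at *; omega
  · intro j hj; simp only [Finset.mem_range] at *; omega
  · intro j hj; simp only [Finset.mem_range] at *; omega
  · intro j hj
    simp only [Finset.mem_range] at hj
    rw [div_pow, one_pow, div_eq_div_iff (pow_ne_zero _ hx) (pow_ne_zero _ hx),
      one_mul, ← pow_add]
    congr 1; beta_reduce; omega

/-- The enhanced van Leer limiter `φ_{A,B}(θ) = B·(S_k(θ)/T_k(θ))·(T_k(A)/S_k(A))`
    satisfies the symmetry-preserving condition `φ_{A,B}(θ)/θ = φ_{1/A, B/A}(1/θ)`. -/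
theorem enhanced_vanLeer_symmetry (A θ B : ℝ) (hA : 0 < A) (hθ : 0 < θ)
    (k : ℕ) (hk : 1 ≤ k) :
    (B * (vlS k θ / vlT k θ) * (vlT k A / vlS k A)) / θ =
      (B / A) * (vlS k (1 / θ) / vlT k (1 / θ)) * (vlT k (1 / A) / vlS k (1 / A)) := by
  rw [vlS_inv k hθ.ne', vlT_inv k hθ.ne', vlS_inv k hA.ne', vlT_inv k hA.ne']
  have h1 := (vlS_pos hk hθ).ne'
  have h2 := (vlT_pos k hθ).ne'
  have h3 := (vlS_pos hk hA).ne'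
  have h4 := (vlT_pos k hA).ne'
  field_simp
  ring
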